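/- If G is a connected α-critical graph with a perfect matching and n(G) - 2α(G) = 2, and G has a spanning subgraph consisting of a matching together with an even number ℓ of vertex-disjoint odd cycles where some edge of G lies outside this spanning subgraph, then ℓ = 0 (i.e., the spanning subgraph is a perfect matching). -/

import Mathlib

open SimpleGraph

variable {V : Type*}

/-- A graph has a perfect matching. -/
def HasPM (G : SimpleGraph V) : Prop := ∃ M : G.Subgraph, M.IsPerfectMatching

/-- A set of vertices is independent (pairwise nonadjacent). -/
def IsIndep (G : SimpleGraph V) (s : Set V) : Prop := ∀ x ∈ s, ∀ y ∈ s, ¬ G.Adj x y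

/-- The independence number. -/
noncomputable def alphaNum (G : SimpleGraph V) : ℕ :=
  sSup {n | ∃ s : Set V, IsIndep G s ∧ s.ncard = n}

/-- The matching number. -/
noncomputable def matchNum (G : SimpleGraph V) : ℕ :=
  sSup {n | ∃ M : G.Subgraph, M.IsMatching ∧ M.edgeSet.ncard = n}

/-- A graph is König-Egerváry if α + ν = n. -/
def IsKE (G : SimpleGraph V) : Prop := alphaNum G + matchNum G = Nat.card V

/-- `G` is (the whole graph) an even subdivision of `K₄`: four corner vertices and six
internally disjoint odd paths joining each pair of corners, comprising all vertices
and edges of `G`. -/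
def IsEvenSubdivK4 (G : SimpleGraph V) : Prop :=
  ∃ (c : Fin 4 → V) (P : ∀ i j : Fin 4, G.Walk (c i) (c j)),
    Function.Injective c ∧
    (∀ i j : Fin 4, P j i = (P i j).reverse) ∧
    (∀ i j : Fin 4, i ≠ j → (P i j).IsPath ∧ Odd (P i j).length) ∧
    (∀ i j k l : Fin 4, i ≠ j → k ≠ l → ¬(i = k ∧ j = l) → ¬(i = l ∧ j = k) →
      ∀ x : V, x ∈ (P i j).support → x ∈ (P k l).support → x ∈ Set.range c) ∧
    (∀ x : V, ∃ i j : Fin 4, i ≠ j ∧ x ∈ (P i j).support) ∧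
    (∀ e : Sym2 V, e ∈ G.edgeSet ↔ ∃ i j : Fin 4, i ≠ j ∧ e ∈ (P i j).edges)

/-- `G` is (the whole graph) an even subdivision of `T`: two vertex-disjoint odd cycles
joined at blossom tips `v`, `w` by an odd path internally disjoint from the cycles,
comprising all vertices and edges of `G`. -/
def IsEvenSubdivT (G : SimpleGraph V) : Prop :=
  ∃ (v w : V) (C1 : G.Walk v v) (C2 : G.Walk w w) (P : G.Walk v w),
    C1.IsCycle ∧ C2.IsCycle ∧ Odd C1.length ∧ Odd C2.length ∧
    P.IsPath ∧ Odd P.length ∧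
    (∀ x : V, x ∈ C1.support → x ∉ C2.support) ∧
    (∀ x : V, x ∈ P.support → x ∈ C1.support → x = v) ∧
    (∀ x : V, x ∈ P.support → x ∈ C2.support → x = w) ∧
    (∀ x : V, x ∈ C1.support ∨ x ∈ C2.support ∨ x ∈ P.support) ∧
    (∀ e : Sym2 V, e ∈ G.edgeSet ↔ e ∈ C1.edges ∨ e ∈ C2.edges ∨ e ∈ P.edges)

/-- `G` contains a nice even subdivision of `T`: a subgraph `H` which is an even
subdivision of `T` and such that `G - V(H)` has a perfect matching. -/
def HasNiceEvenSubdivT (G : SimpleGraph V) : Prop :=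
  ∃ H : G.Subgraph, IsEvenSubdivT H.coe ∧ HasPM (G.induce (H.vertsᶜ))

/-- `G` has a spanning subgraph whose components are independent edges together with a
positive number of vertex-disjoint odd cycles. -/
def HasOddCycleCover (G : SimpleGraph V) : Prop :=
  ∃ (M : G.Subgraph) (k : ℕ) (u : Fin k → V) (C : ∀ i : Fin k, G.Walk (u i) (u i)),
    0 < k ∧ M.IsMatching ∧
    (∀ i, (C i).IsCycle ∧ Odd (C i).length) ∧
    (∀ i j, i ≠ j → ∀ x : V, x ∈ (C i).support → x ∉ (C j).support) ∧
    (∀ i, ∀ x ∈ (C i).support, x ∉ M.verts) ∧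
    (∀ x : V, x ∈ M.verts ∨ ∃ i, x ∈ (C i).support)

/-- A matchable graph is Egerváry iff it has no such spanning cover. -/
def IsEgervary (G : SimpleGraph V) : Prop := ¬ HasOddCycleCover G

/-- `G` contains two vertex-disjoint odd cycles. -/
def TwoDisjointOddCycles (G : SimpleGraph V) : Prop :=
  ∃ (a b : V) (C1 : G.Walk a a) (C2 : G.Walk b b),
    C1.IsCycle ∧ C2.IsCycle ∧ Odd C1.length ∧ Odd C2.length ∧
    ∀ x : V, x ∈ C1.support → x ∉ C2.support

/-- `G` is α-critical: deleting any edge increases the independence number. -/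
def AlphaCritical (G : SimpleGraph V) : Prop :=
  ∀ e ∈ G.edgeSet, alphaNum (G.deleteEdges {e}) = alphaNum G + 1

/-- The (open) neighborhood of a set of vertices. -/
def setN (G : SimpleGraph V) (I : Set V) : Set V := {x | x ∉ I ∧ ∃ y ∈ I, G.Adj x y}

private lemma walk_support_getElem {V : Type*} {G : SimpleGraph V} {a b : V} (p : G.Walk a b) :
    ∀ (i : ℕ) (hi : i < p.support.length), p.support[i] = p.getVert i := by
  induction p with
  | nil =>
    intro i hi
    simp only [Walk.support_nil, List.length_singleton] at hi
    interval_cases i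
    · rfl
  | cons h q ih =>
    intro i hi
    cases i with
    | zero => simp
    | succ n =>
      simp only [Walk.support_cons, List.getElem_cons_succ, Walk.getVert_cons_succ]
      exact ih n (by simp only [Walk.support_cons, List.length_cons] at hi; omega)

private lemma exists_indep_alphaNum {V : Type*} [Fintype V] (H : SimpleGraph V) :
    ∃ s : Set V, IsIndep H s ∧ s.ncard = alphaNum H := by
  have hne : {n | ∃ s : Set V, IsIndep H s ∧ s.ncard = n}.Nonempty :=
    ⟨0, ∅, fun x hx => (Set.notMem_empty x hx).elim, by simp⟩
  have hbdd : BddAbove {n | ∃ s : Set V, IsIndep H s ∧ s.ncard = n} := by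
    refine ⟨Fintype.card V, ?_⟩
    rintro n ⟨s, _, rfl⟩
    exact le_trans (Set.ncard_le_ncard (Set.subset_univ s) Set.finite_univ)
      (by simp [Set.ncard_univ, Nat.card_eq_fintype_card])
  have h := Nat.sSup_mem hne hbdd
  exact h

private lemma matching_indep_bound {V : Type*} [DecidableEq V] {G : SimpleGraph V}
    {M : G.Subgraph} (hM : M.IsMatching) {H : SimpleGraph V}
    (hMH : ∀ a b, M.Adj a b → H.Adj a b) (S : Finset V)
    (hS : ∀ x ∈ S, ∀ y ∈ S, ¬ H.Adj x y)
    (T : Finset V) (hT : ∀ x, x ∈ T ↔ x ∈ M.verts) :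
    2 * (T.filter (· ∈ S)).card ≤ T.card := by
  classical
  set p : V → V := fun v => if h : v ∈ M.verts then (hM h).choose else v with hp
  have hp1 : ∀ v (h : v ∈ M.verts), M.Adj v (p v) := by
    intro v h
    simp only [hp, dif_pos h]
    exact (hM h).choose_spec.1
  have hmap : ∀ a ∈ T.filter (· ∈ S), p a ∈ T.filter (· ∉ S) := by
    intro a ha
    rw [Finset.mem_filter] at ha ⊢
    have haM : a ∈ M.verts := (hT a).mp ha.1
    have hadj := hp1 a haM
    have hpv : p a ∈ M.verts := M.edge_vert hadj.symm
    refine ⟨(hT _).mpr hpv, ?_⟩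
    intro hpS
    exact hS a ha.2 (p a) hpS (hMH _ _ hadj)
  have hinj : Set.InjOn p (T.filter (· ∈ S)) := by
    intro a ha a' ha' hpp
    have haM : a ∈ M.verts := (hT a).mp (Finset.mem_filter.mp ha).1
    have haM' : a' ∈ M.verts := (hT a').mp (Finset.mem_filter.mp ha').1
    have h1 := hp1 a haM
    have h2 := hp1 a' haM'
    rw [hpp] at h1
    have hw : p a' ∈ M.verts := M.edge_vert h2.symm
    exact ((hM hw).unique h1.symm h2.symm)
  have h1 : (T.filter (· ∈ S)).card ≤ (T.filter (· ∉ S)).card :=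
    Finset.card_le_card_of_injOn p hmap hinj
  have h2 : (T.filter (· ∈ S)).card + (T.filter (· ∉ S)).card = T.card :=
    Finset.card_filter_add_card_filter_not _
  omega

private lemma cycle_indep_bound {V : Type*} [DecidableEq V] {H : SimpleGraph V} {u : V}
    (C : H.Walk u u) (hC : C.IsCycle) (hodd : Odd C.length) (S : Finset V)
    (hS : ∀ x ∈ S, ∀ y ∈ S, ¬ H.Adj x y) :
    2 * ((C.support.toFinset).filter (· ∈ S)).card + 1 ≤ C.support.toFinset.card := by
  have h3 : 3 ≤ C.length := hC.three_le_length
  haveI : NeZero C.length := ⟨by omega⟩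
  have hlen : C.support.tail.length = C.length := by
    rw [List.length_tail, Walk.length_support]
    omega
  have hnd : C.support.tail.Nodup := ((Walk.isCycle_def _).mp hC).2.2
  have hget : ∀ (i : ℕ) (hi : i < C.support.tail.length),
      C.support.tail[i] = C.getVert (i + 1) := by
    intro i hi
    rw [List.getElem_tail]
    exact walk_support_getElem C (i + 1) (by rw [Walk.length_support]; omega)
  have hinj : Function.Injective (fun i : Fin C.length => C.getVert ((i : ℕ) + 1)) := by
    intro i j hij
    have hi : (i : ℕ) < C.support.tail.length := by rw [hlen]; exact i.isLt
    have hj : (j : ℕ) < C.support.tail.length := by rw [hlen]; exact j.isLt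
    have heq : C.support.tail.get ⟨i, hi⟩ = C.support.tail.get ⟨j, hj⟩ := by
      simp only [List.get_eq_getElem]
      rw [hget _ hi, hget _ hj]
      exact hij
    have h := List.nodup_iff_injective_get.mp hnd heq
    exact Fin.ext (by simpa using congrArg Fin.val h)
  have hadj : ∀ i : Fin C.length,
      H.Adj (C.getVert ((i : ℕ) + 1)) (C.getVert (((i + 1 : Fin C.length) : ℕ) + 1)) := by
    intro i
    have hval : ((i + 1 : Fin C.length) : ℕ) = ((i : ℕ) + 1) % C.length := by
      rw [Fin.add_def]
      simp [Fin.val_one', Nat.mod_eq_of_lt (show 1 < C.length by omega)]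
    by_cases hc : (i : ℕ) + 1 < C.length
    · have h2 : ((i + 1 : Fin C.length) : ℕ) = (i : ℕ) + 1 := by
        rw [hval, Nat.mod_eq_of_lt hc]
      rw [h2]
      exact C.adj_getVert_succ hc
    · have hi1 : (i : ℕ) + 1 = C.length := by have := i.isLt; omega
      have h2 : ((i + 1 : Fin C.length) : ℕ) = 0 := by rw [hval, hi1, Nat.mod_self]
      rw [h2, hi1, Walk.getVert_length]
      simpa using C.adj_getVert_succ (show 0 < C.length by omega)
  have hdisj : Disjoint (Finset.univ.filter (fun i : Fin C.length => C.getVert ((i : ℕ) + 1) ∈ S))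
      ((Finset.univ.filter (fun i : Fin C.length => C.getVert ((i : ℕ) + 1) ∈ S)).image
        (· + 1)) := by
    rw [Finset.disjoint_left]
    intro j hjA hjB
    obtain ⟨i, hiA, hij⟩ := Finset.mem_image.mp hjB
    have h1 : C.getVert ((i : ℕ) + 1) ∈ S := (Finset.mem_filter.mp hiA).2
    subst hij
    have h2 : C.getVert (((i + 1 : Fin C.length) : ℕ) + 1) ∈ S := (Finset.mem_filter.mp hjA).2
    exact hS _ h1 _ h2 (hadj i)
  have hcards : (Finset.univ.filter (fun i : Fin C.length => C.getVert ((i : ℕ) + 1) ∈ S)).card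
      + (Finset.univ.filter (fun i : Fin C.length => C.getVert ((i : ℕ) + 1) ∈ S)).card
      ≤ C.length := by
    have himg : ((Finset.univ.filter
        (fun i : Fin C.length => C.getVert ((i : ℕ) + 1) ∈ S)).image (· + 1)).card
        = (Finset.univ.filter (fun i : Fin C.length => C.getVert ((i : ℕ) + 1) ∈ S)).card :=
      Finset.card_image_of_injective _ (add_left_injective 1)
    calc (Finset.univ.filter (fun i : Fin C.length => C.getVert ((i : ℕ) + 1) ∈ S)).card
        + (Finset.univ.filter (fun i : Fin C.length => C.getVert ((i : ℕ) + 1) ∈ S)).card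
        = ((Finset.univ.filter (fun i : Fin C.length => C.getVert ((i : ℕ) + 1) ∈ S))
          ∪ (Finset.univ.filter
            (fun i : Fin C.length => C.getVert ((i : ℕ) + 1) ∈ S)).image (· + 1)).card := by
          rw [Finset.card_union_of_disjoint hdisj, himg]
      _ ≤ (Finset.univ : Finset (Fin C.length)).card := Finset.card_le_univ _
      _ = C.length := by simp
  have hsupp_mem : ∀ x, x ∈ C.support ↔ ∃ i : Fin C.length, C.getVert ((i : ℕ) + 1) = x := by
    intro x
    rw [Walk.mem_support_iff_exists_getVert]
    constructor
    · rintro ⟨m, hmx, hmle⟩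
      by_cases hm0 : m = 0
      · refine ⟨⟨C.length - 1, by omega⟩, ?_⟩
        show C.getVert ((C.length - 1) + 1) = x
        rw [(by omega : C.length - 1 + 1 = C.length), Walk.getVert_length, ← hmx, hm0,
          Walk.getVert_zero]
      · refine ⟨⟨m - 1, by omega⟩, ?_⟩
        show C.getVert ((m - 1) + 1) = x
        rw [(by omega : m - 1 + 1 = m)]
        exact hmx
    · rintro ⟨i, rfl⟩
      exact ⟨(i : ℕ) + 1, rfl, by have := i.isLt; omega⟩
  have himg2 : (Finset.univ.filter (fun i : Fin C.length => C.getVert ((i : ℕ) + 1) ∈ S)).image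
      (fun i : Fin C.length => C.getVert ((i : ℕ) + 1)) = (C.support.toFinset).filter (· ∈ S) := by
    ext x
    simp only [Finset.mem_image, Finset.mem_filter, List.mem_toFinset, Finset.mem_univ, true_and]
    constructor
    · rintro ⟨i, hiS, rfl⟩
      exact ⟨(hsupp_mem _).mpr ⟨i, rfl⟩, hiS⟩
    · rintro ⟨hx, hxS⟩
      obtain ⟨i, rfl⟩ := (hsupp_mem x).mp hx
      exact ⟨i, hxS, rfl⟩
  have hcard2 : ((C.support.toFinset).filter (· ∈ S)).card
      = (Finset.univ.filter (fun i : Fin C.length => C.getVert ((i : ℕ) + 1) ∈ S)).card := by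
    rw [← himg2]
    exact Finset.card_image_of_injOn hinj.injOn
  have hcard3 : C.support.toFinset.card = C.length := by
    have hsf : C.support.toFinset = C.support.tail.toFinset := by
      conv_lhs => rw [Walk.support_eq_cons]
      rw [List.toFinset_cons]
      apply Finset.insert_eq_self.mpr
      rw [List.mem_toFinset]
      have hb : C.length - 1 < C.support.tail.length := by rw [hlen]; omega
      have hu : C.support.tail[C.length - 1] = u := by
        rw [hget _ hb, (by omega : C.length - 1 + 1 = C.length)]
        exact C.getVert_length
      exact List.mem_iff_getElem.mpr ⟨C.length - 1, hb, hu⟩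
    rw [hsf, List.toFinset_card_of_nodup hnd, hlen]
  rw [hcard2, hcard3]
  obtain ⟨k, hk⟩ := hodd
  omega


/-- If `G` is connected, α-critical, matchable, with `n - 2α = 2`, and `G` has a spanning
subgraph consisting of a matching together with an even number `ℓ` of vertex-disjoint odd
cycles, with some edge of `G` outside this spanning subgraph, then `ℓ = 0`. -/
theorem alphaCritical_delta_two_cover_no_cycles {V : Type*} [Fintype V] (G : SimpleGraph V)
    (hconn : G.Connected) (hcrit : AlphaCritical G) (hPM : HasPM G)
    (hdelta : Nat.card V = 2 * alphaNum G + 2)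
    (M : G.Subgraph) (hM : M.IsMatching) (ℓ : ℕ) (hev : Even ℓ)
    (u : Fin ℓ → V) (C : ∀ i : Fin ℓ, G.Walk (u i) (u i))
    (hcyc : ∀ i, (C i).IsCycle ∧ Odd (C i).length)
    (hCdisj : ∀ i j, i ≠ j → ∀ x : V, x ∈ (C i).support → x ∉ (C j).support)
    (hCM : ∀ i, ∀ x ∈ (C i).support, x ∉ M.verts)
    (hspan : ∀ x : V, x ∈ M.verts ∨ ∃ i, x ∈ (C i).support)
    (hextra : ∃ e ∈ G.edgeSet, e ∉ M.edgeSet ∧ ∀ i, e ∉ (C i).edges) :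
    ℓ = 0 := by
    classical
  obtain ⟨e, he, heM, heC⟩ := hextra
  have hα := hcrit e he
  obtain ⟨Sset, hSind, hScard⟩ := exists_indep_alphaNum (G.deleteEdges {e})
  rw [hα] at hScard
  set H := G.deleteEdges {e} with hH
  set S : Finset V := Sset.toFinset with hSdef
  have hScard' : S.card = alphaNum G + 1 := by
    rw [hSdef, ← Set.ncard_eq_toFinset_card']
    exact hScard
  have hSfin : ∀ x ∈ S, ∀ y ∈ S, ¬ H.Adj x y := by
    intro x hx y hy
    exact hSind x (Set.mem_toFinset.mp hx) y (Set.mem_toFinset.mp hy)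
  have hCedges : ∀ i, ∀ f ∈ (C i).edges, f ∈ H.edgeSet := by
    intro i f hf
    rw [hH, edgeSet_deleteEdges]
    refine ⟨(C i).edges_subset_edgeSet hf, ?_⟩
    simp only [Set.mem_singleton_iff]
    rintro rfl
    exact heC i hf
  have hDcyc : ∀ i, ((C i).transfer H (hCedges i)).IsCycle := by
    intro i
    have hc := (hcyc i).1
    rw [Walk.isCycle_def] at hc ⊢
    refine ⟨?_, ?_, ?_⟩
    · rw [Walk.isTrail_def, Walk.edges_transfer]
      exact hc.1.edges_nodup
    · intro hnil
      have hl : ((C i).transfer H (hCedges i)).length = (C i).length :=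
        Walk.length_transfer _ _
      rw [hnil] at hl
      simp only [Walk.length_nil] at hl
      exact hc.2.1 (Walk.nil_iff_eq_nil.mp (Walk.length_eq_zero_iff.mp hl.symm))
    · rw [Walk.support_transfer]
      exact hc.2.2
  have hDodd : ∀ i, Odd ((C i).transfer H (hCedges i)).length := by
    intro i
    rw [Walk.length_transfer]
    exact (hcyc i).2
  have hMadj : ∀ a b, M.Adj a b → H.Adj a b := by
    intro a b hab
    rw [hH, deleteEdges_adj]
    refine ⟨M.adj_sub hab, ?_⟩
    simp only [Set.mem_singleton_iff]
    intro habe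
    exact heM (habe ▸ Subgraph.mem_edgeSet.mpr hab)
  set g : V → Option (Fin ℓ) :=
    fun x => if h : ∃ i, x ∈ (C i).support then some h.choose else none with hg
  have hgsome : ∀ x i, g x = some i ↔ x ∈ (C i).support := by
    intro x i
    constructor
    · intro hx
      rw [hg] at hx
      by_cases h : ∃ j, x ∈ (C j).support
      · simp only [dif_pos h, Option.some_inj] at hx
        exact hx ▸ h.choose_spec
      · simp only [dif_neg h] at hx
        exact absurd hx (by simp)
    · intro hx
      have h : ∃ j, x ∈ (C j).support := ⟨i, hx⟩
      rw [hg]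
      simp only [dif_pos h, Option.some_inj]
      by_contra hne
      exact hCdisj h.choose i hne x h.choose_spec hx
  have hgnone : ∀ x, g x = none ↔ x ∈ M.verts := by
    intro x
    constructor
    · intro hx
      rcases hspan x with h | ⟨i, hi⟩
      · exact h
      · rw [(hgsome x i).mpr hi] at hx
        exact absurd hx (by simp)
    · intro hx
      show (if h : ∃ i, x ∈ (C i).support then some h.choose else none) = none
      rw [dif_neg]
      rintro ⟨i, hi⟩
      exact hCM i x hi hx
  have hfibU_none : Finset.univ.filter (fun x => g x = none) = M.verts.toFinset := by
    ext x
    simp [hgnone x, Set.mem_toFinset]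
  have hfibU_some : ∀ i, Finset.univ.filter (fun x => g x = some i)
      = ((C i).transfer H (hCedges i)).support.toFinset := by
    intro i
    ext x
    simp [hgsome x i, Walk.support_transfer, List.mem_toFinset]
  have hfibS_none : S.filter (fun x => g x = none) = M.verts.toFinset.filter (· ∈ S) := by
    ext x
    simp only [Finset.mem_filter, Set.mem_toFinset, hgnone x]
    tauto
  have hfibS_some : ∀ i, S.filter (fun x => g x = some i)
      = (((C i).transfer H (hCedges i)).support.toFinset).filter (· ∈ S) := by
    intro i
    ext x
    simp only [Finset.mem_filter, List.mem_toFinset, hgsome x i, Walk.support_transfer]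
    tauto
  have hb_none : 2 * (S.filter (fun x => g x = none)).card
      ≤ (Finset.univ.filter (fun x => g x = none)).card := by
    rw [hfibS_none, hfibU_none]
    exact matching_indep_bound hM hMadj S hSfin _ (fun x => Set.mem_toFinset)
  have hb_some : ∀ i, 2 * (S.filter (fun x => g x = some i)).card + 1
      ≤ (Finset.univ.filter (fun x => g x = some i)).card := by
    intro i
    rw [hfibS_some i, hfibU_some i]
    exact cycle_indep_bound _ (hDcyc i) (hDodd i) S hSfin
  have hsumS : S.card = ∑ o : Option (Fin ℓ), (S.filter (fun x => g x = o)).card :=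
    Finset.card_eq_sum_card_fiberwise (fun x _ => Finset.mem_univ _)
  have hsumU : (Finset.univ : Finset V).card
      = ∑ o : Option (Fin ℓ), (Finset.univ.filter (fun x => g x = o)).card :=
    Finset.card_eq_sum_card_fiberwise (fun x _ => Finset.mem_univ _)
  have hsum2 : ∑ i : Fin ℓ, (2 * (S.filter (fun x => g x = some i)).card + 1)
      ≤ ∑ i : Fin ℓ, (Finset.univ.filter (fun x => g x = some i)).card :=
    Finset.sum_le_sum (fun i _ => hb_some i)
  have hsum3 : ∑ i : Fin ℓ, (2 * (S.filter (fun x => g x = some i)).card + 1)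
      = 2 * (∑ i : Fin ℓ, (S.filter (fun x => g x = some i)).card) + ℓ := by
    rw [Finset.sum_add_distrib, ← Finset.mul_sum]
    simp
  rw [Fintype.sum_option] at hsumS hsumU
  have hkey : 2 * S.card + ℓ ≤ Fintype.card V := by
    rw [← Finset.card_univ, hsumU, hsumS]
    omega
  have hn : Fintype.card V = 2 * alphaNum G + 2 := by
    rw [← Nat.card_eq_fintype_card]
    exact hdelta
  omega
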